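/- For a ≥ 2 and l ∈ ⟨a, a+1⟩ with Euclidean division l = a*x + y (0 ≤ y < a): if x - a ≤ y ≤ a - 1 then ν(l) = (x - y + 1)(y + 1), and otherwise ν(l) = l - a(a-1) + 1. -/
import Mathlib

def Lam (a : ℕ) : Set ℕ := {n | ∃ i j : ℕ, n = i * a + j * (a + 1)}

noncomputable def nu (a l : ℕ) : ℕ := {m | m ∈ Lam a ∧ ∃ k ∈ Lam a, m + k = l}.ncard

private lemma uniq {a u v x y : ℕ} (ha : 0 < a) (hv : v < a) (hy : y < a)
    (h : a * u + v = a * x + y) : u = x ∧ v = y := by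
  have h1 := congrArg (· % a) h
  have h2 := congrArg (· / a) h
  simp only [Nat.mul_add_mod, Nat.mod_eq_of_lt hv, Nat.mod_eq_of_lt hy] at h1
  simp only [Nat.mul_add_div ha, Nat.div_eq_of_lt hv, Nat.div_eq_of_lt hy, Nat.add_zero] at h2
  exact ⟨h2, h1⟩

private lemma lam_iff {a : ℕ} (ha : 0 < a) {n : ℕ} : n ∈ Lam a ↔ n % a ≤ n / a := by
  constructor
  · rintro ⟨i, j, rfl⟩
    have h1 : i * a + j * (a + 1) = j + (i + j) * a := by ring
    rw [h1, Nat.add_mul_div_right _ _ ha, Nat.add_mul_mod_self_right]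
    exact (Nat.mod_le j a).trans ((Nat.le_add_left j i).trans (Nat.le_add_left (i + j) (j / a)))
  · intro h
    refine ⟨n / a - n % a, n % a, ?_⟩
    have h4 : (a : ℤ) * (n / a) + (n % a) = n := by exact_mod_cast Nat.div_add_mod n a
    zify [h]
    linear_combination -h4

private lemma key {a : ℕ} (ha : 2 ≤ a) (x y d l : ℕ) (hy : y < a) (hl : a * x + y = l)
    (hd : x = y + d) :
    nu a l = (d + 1) * (y + 1) + (d - a) * (a - (y + 1)) := by
  classical
  have ha0 : 0 < a := by omega
  set φ : ℕ × ℕ → ℕ := fun p => a * (p.1 + p.2) + p.2 with hφ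
  set T : Finset (ℕ × ℕ) :=
    (Finset.range (d+1) ×ˢ Finset.range (y+1)) ∪ (Finset.range (d-a) ×ˢ Finset.Ico (y+1) a)
    with hT
  have hmemT : ∀ p : ℕ × ℕ, p ∈ T ↔
      ((p.1 < d + 1 ∧ p.2 < y + 1) ∨ (p.1 < d - a ∧ (y + 1 ≤ p.2 ∧ p.2 < a))) := by
    intro p
    simp [hT, Finset.mem_union, Finset.mem_product, Finset.mem_range, Finset.mem_Ico]
  have hSet : {m | m ∈ Lam a ∧ ∃ k ∈ Lam a, m + k = l} = ↑(T.image φ) := by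
    ext m
    simp only [Set.mem_setOf_eq, Finset.coe_image, Set.mem_image, Finset.mem_coe]
    constructor
    · rintro ⟨hmL, k, hkL, hmk⟩
      obtain ⟨u, v, u', v', hm, hk, hv, hv', huv, hu'v'⟩ :
          ∃ u v u' v', a * u + v = m ∧ a * u' + v' = k ∧ v < a ∧ v' < a ∧ v ≤ u ∧ v' ≤ u' :=
        ⟨m / a, m % a, k / a, k % a, Nat.div_add_mod m a, Nat.div_add_mod k a,
          Nat.mod_lt _ ha0, Nat.mod_lt _ ha0, (lam_iff ha0).mp hmL, (lam_iff ha0).mp hkL⟩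
      have E : a * (u + u') + (v + v') = a * x + y := by
        rw [hl, ← hmk, ← hm, ← hk]; ring
      rcases lt_or_ge (v + v') a with hc | hc
      · obtain ⟨e1, e2⟩ := uniq ha0 hc hy E
        refine ⟨(u - v, v), (hmemT _).mpr (Or.inl ⟨by omega, by omega⟩), ?_⟩
        show a * ((u - v) + v) + v = m
        rw [Nat.sub_add_cancel huv, hm]
      · have E2 : a * (u + u' + 1) + (v + v' - a) = a * x + y := by
          calc a * (u + u' + 1) + (v + v' - a)
              = a * (u + u') + (a + (v + v' - a)) := by ring
            _ = a * (u + u') + (v + v') := by rw [Nat.add_sub_cancel' hc]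
            _ = a * x + y := E
        obtain ⟨e1, e2⟩ := uniq ha0 (by omega) hy E2
        refine ⟨(u - v, v), (hmemT _).mpr (Or.inr ⟨by omega, by omega, by omega⟩), ?_⟩
        show a * ((u - v) + v) + v = m
        rw [Nat.sub_add_cancel huv, hm]
    · rintro ⟨⟨s, v⟩, hp, rfl⟩
      rw [hmemT] at hp
      simp only at hp
      show a * (s + v) + v ∈ Lam a ∧ ∃ k ∈ Lam a, a * (s + v) + v + k = l
      refine ⟨⟨s, v, by ring⟩, ?_⟩
      rcases hp with ⟨hs, hv⟩ | ⟨hs, hv1, hv2⟩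
      · refine ⟨a * ((d - s) + (y - v)) + (y - v), ⟨d - s, y - v, by ring⟩, ?_⟩
        have h1 : s + v + ((d - s) + (y - v)) = x := by omega
        have h2 : v + (y - v) = y := by omega
        calc a * (s + v) + v + (a * ((d - s) + (y - v)) + (y - v))
            = a * (s + v + ((d - s) + (y - v))) + (v + (y - v)) := by ring
          _ = a * x + y := by rw [h1, h2]
          _ = l := hl
      · refine ⟨a * ((d - a - 1 - s) + (a + y - v)) + (a + y - v),
          ⟨d - a - 1 - s, a + y - v, by ring⟩, ?_⟩
        have h1 : s + v + ((d - a - 1 - s) + (a + y - v)) + 1 = x := by omega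
        have h2 : v + (a + y - v) = a + y := by omega
        calc a * (s + v) + v + (a * ((d - a - 1 - s) + (a + y - v)) + (a + y - v))
            = a * (s + v + ((d - a - 1 - s) + (a + y - v))) + (v + (a + y - v)) := by ring
          _ = a * (s + v + ((d - a - 1 - s) + (a + y - v))) + a + y := by rw [h2]; ring
          _ = a * (s + v + ((d - a - 1 - s) + (a + y - v)) + 1) + y := by ring
          _ = a * x + y := by rw [h1]
          _ = l := hl
  have hinj : Set.InjOn φ ↑T := by
    intro p hp q hq hpq
    rw [Finset.mem_coe, hmemT] at hp hq
    have hpv : p.2 < a := by omega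
    have hqv : q.2 < a := by omega
    obtain ⟨h1, h2⟩ := uniq ha0 hpv hqv hpq
    have : p.1 = q.1 := by omega
    exact Prod.ext this h2
  have hdisj : Disjoint (Finset.range (d+1) ×ˢ Finset.range (y+1))
      (Finset.range (d-a) ×ˢ Finset.Ico (y+1) a) := by
    rw [Finset.disjoint_left]
    intro p hp1 hp2
    simp only [Finset.mem_product, Finset.mem_range, Finset.mem_Ico] at hp1 hp2
    omega
  rw [nu, hSet, Set.ncard_coe_finset, Finset.card_image_of_injOn hinj, hT,
    Finset.card_union_of_disjoint hdisj, Finset.card_product, Finset.card_product,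
    Finset.card_range, Finset.card_range, Finset.card_range, Nat.card_Ico]

theorem stmt11 (a l : ℕ) (ha : 2 ≤ a) (hl : l ∈ Lam a) :
    (((l / a : ℤ) - a ≤ l % a ∧ (l % a : ℤ) ≤ a - 1) →
      nu a l = (l / a - l % a + 1) * (l % a + 1)) ∧
    (¬ ((l / a : ℤ) - a ≤ l % a ∧ (l % a : ℤ) ≤ a - 1) →
      nu a l = l + 1 - a * (a - 1)) := by
  have ha0 : 0 < a := by omega
  have hyx : l % a ≤ l / a := (lam_iff ha0).mp hl
  have hy : l % a < a := Nat.mod_lt _ ha0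
  have hdm : a * (l / a) + l % a = l := Nat.div_add_mod l a
  have e1 : ((l : ℤ) / (a : ℤ)) = ((l / a : ℕ) : ℤ) := (Int.natCast_div l a).symm
  have e2 : ((l : ℤ) % (a : ℤ)) = ((l % a : ℕ) : ℤ) := by push_cast; ring
  rw [e1, e2]
  obtain ⟨x, hx⟩ : ∃ x, l / a = x := ⟨_, rfl⟩
  obtain ⟨y, hy2⟩ : ∃ y, l % a = y := ⟨_, rfl⟩
  rw [hx] at hyx hdm ⊢
  rw [hy2] at hyx hy hdm ⊢
  have hkey := key ha x y (x - y) l hy hdm (by omega)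
  constructor
  · rintro ⟨h1, -⟩
    have hda : x - y ≤ a := by omega
    rw [hkey]
    have h0 : x - y - a = 0 := by omega
    rw [h0]
    simp
  · intro hC
    have hda : a + 1 ≤ x - y := by
      by_contra h
      push_neg at h
      exact hC ⟨by omega, by omega⟩
    rw [hkey]
    have hax : a * x ≤ l := Nat.le.intro hdm
    have hge : a * (a - 1) ≤ l + 1 := by
      calc a * (a - 1) ≤ a * x := Nat.mul_le_mul_left a (by omega)
        _ ≤ l + 1 := by omega
    have hlZ : (a : ℤ) * x + y = l := by exact_mod_cast hdm
    have h1 : 1 ≤ a := by omega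
    have hya : y + 1 ≤ a := by omega
    have hax2 : a ≤ x - y := by omega
    zify [hyx, hax2, hya, hge, h1]
    linear_combination hlZ
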